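/- For every N ≥ 1 and all real x, y: Σ_{k=0}^{N−1} φ_k(x) φ_k(y) = (√(2N)/2) ∫₀^∞ [φ_N(x+z) φ_{N−1}(y+z) + φ_{N−1}(x+z) φ_N(y+z)] dz, the integral on the right being convergent. -/

import Mathlib

open Real Filter MeasureTheory

/-- Physicists' Hermite polynomial `H_n(x) = (-1)^n e^{x²} (d^n/dx^n) e^{-x²}`. -/
noncomputable def physHermite (n : ℕ) (x : ℝ) : ℝ :=
  (-1 : ℝ) ^ n * Real.exp (x ^ 2) * iteratedDeriv n (fun t : ℝ => Real.exp (-t ^ 2)) x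

/-- Normalizing constant `h_n = √π 2^n n!`. -/
noncomputable def hNorm (n : ℕ) : ℝ := Real.sqrt Real.pi * 2 ^ n * (n.factorial : ℝ)

/-- Oscillator wave function `φ_n(x) = h_n^{-1/2} e^{-x²/2} H_n(x)`. -/
noncomputable def osc (n : ℕ) (x : ℝ) : ℝ :=
  hNorm n ^ (-(1 : ℝ) / 2) * Real.exp (-x ^ 2 / 2) * physHermite n x

/-- Airy function `Ai(x) = π⁻¹ lim_{R→∞} ∫₀^R cos(t³/3 + xt) dt`. -/
noncomputable def Ai (x : ℝ) : ℝ :=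
  Real.pi⁻¹ *
    limUnder Filter.atTop (fun R : ℝ => ∫ t in (0 : ℝ)..R, Real.cos (t ^ 3 / 3 + x * t))

/-- Scaling constant `τ_N = 2^{-1/2} N^{-1/6}`. -/
noncomputable def tauN (N : ℕ) : ℝ := (2 : ℝ) ^ (-(1 : ℝ) / 2) * (N : ℝ) ^ (-(1 : ℝ) / 6)

/-- `Δ_N = (√(2N+1) - √(2N-1))/τ_N`. -/
noncomputable def DeltaN (N : ℕ) : ℝ :=
  (Real.sqrt (2 * N + 1) - Real.sqrt (2 * N - 1)) / tauN N

open Polynomial Topology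

noncomputable def PH : ℕ → Polynomial ℝ
  | 0 => 1
  | n + 1 => C 2 * X * PH n - derivative (PH n)

lemma PH_derivative : ∀ n : ℕ, derivative (PH n) = C (2 * (n : ℝ)) * PH (n - 1) := by
  intro n
  induction n with
  | zero => simp [PH]
  | succ m ih =>
    cases m with
    | zero =>
      show derivative (C 2 * X * PH 0 - derivative (PH 0)) = _
      simp [PH]
    | succ k =>
      show derivative (C 2 * X * PH (k+1) - derivative (PH (k+1))) = _
      rw [derivative_sub, derivative_mul, derivative_mul, ih]
      have hk : (k + 1 : ℕ) - 1 = k := rfl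
      rw [hk] at ih ⊢
      rw [derivative_C_mul]
      rw [show (k+1+1-1 : ℕ) = k+1 from rfl]
      simp only [show (PH (k+1) : Polynomial ℝ) = C 2 * X * PH k - derivative (PH k) from rfl]
      simp only [derivative_C, derivative_X]
      push_cast
      simp only [C_add, C_mul, map_ofNat, C_1]
      ring

lemma hasDerivAt_gauss (x : ℝ) : HasDerivAt (fun t : ℝ => Real.exp (-t ^ 2)) (-2 * x * Real.exp (-x ^ 2)) x := by
  have h : HasDerivAt (fun t : ℝ => -t ^ 2) (-(2 * x)) x := ((hasDerivAt_pow 2 x).neg).congr_deriv (by push_cast; ring)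
  simpa [mul_comm, mul_assoc] using h.exp.congr_deriv (by ring)

lemma iteratedDeriv_gauss (n : ℕ) :
    iteratedDeriv n (fun t : ℝ => Real.exp (-t ^ 2))
      = fun x => (-1 : ℝ) ^ n * (PH n).eval x * Real.exp (-x ^ 2) := by
  induction n with
  | zero => funext x; simp [PH]
  | succ m ih =>
    funext x
    rw [iteratedDeriv_succ, ih]
    have h : HasDerivAt (fun x : ℝ => (-1 : ℝ) ^ m * (PH m).eval x * Real.exp (-x ^ 2))
        ((-1:ℝ)^(m+1) * (PH (m+1)).eval x * Real.exp (-x^2)) x := by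
      have h1 := ((PH m).hasDerivAt x).const_mul ((-1:ℝ)^m)
      have h2 := (h1.mul (hasDerivAt_gauss x))
      refine h2.congr_deriv ?_
      have : (PH (m+1)).eval x = 2 * x * (PH m).eval x - ((PH m).derivative).eval x := by
        simp [show PH (m+1) = Polynomial.C 2 * Polynomial.X * PH m - Polynomial.derivative (PH m) from rfl]
      rw [this]
      ring
    exact h.deriv

lemma physHermite_eval (n : ℕ) (x : ℝ) : physHermite n x = (PH n).eval x := by
  unfold physHermite
  rw [iteratedDeriv_gauss]
  rw [show (-1:ℝ)^n * Real.exp (x^2) * ((-1:ℝ)^n * (PH n).eval x * Real.exp (-x^2))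
      = ((-1:ℝ)^n)^2 * (PH n).eval x * (Real.exp (x^2) * Real.exp (-x^2)) by ring]
  rw [← Real.exp_add]
  simp [← pow_mul, pow_mul']

noncomputable def cN (k : ℕ) : ℝ := hNorm k ^ (-(1 : ℝ) / 2)

lemma hNorm_pos (k : ℕ) : 0 < hNorm k := by
  unfold hNorm
  positivity

lemma cN_pos (k : ℕ) : 0 < cN k := Real.rpow_pos_of_pos (hNorm_pos k) _

lemma hNorm_succ (k : ℕ) : hNorm (k + 1) = (2 * (k + 1)) * hNorm k := by
  unfold hNorm
  rw [Nat.factorial_succ]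
  push_cast
  ring

lemma cN_key (k : ℕ) : Real.sqrt (2 * (k + 1)) * cN (k + 1) = cN k := by
  have h2 : (0:ℝ) < 2 * (k + 1) := by positivity
  unfold cN
  rw [hNorm_succ, Real.sqrt_eq_rpow,
    Real.mul_rpow h2.le (hNorm_pos k).le, ← mul_assoc,
    ← Real.rpow_add h2]
  norm_num

lemma osc_eq (k : ℕ) (u : ℝ) : osc k u = cN k * (Real.exp (-u ^ 2 / 2) * (PH k).eval u) := by
  rw [osc, physHermite_eval, cN]; ring

lemma osc_hasDerivAt (k : ℕ) (u : ℝ) :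
    HasDerivAt (osc k)
      (Real.sqrt (2 * k) / 2 * osc (k - 1) u - Real.sqrt (2 * (k + 1)) / 2 * osc (k + 1) u) u := by
  have hE : HasDerivAt (fun u : ℝ => Real.exp (-u ^ 2 / 2)) (-u * Real.exp (-u ^ 2 / 2)) u := by
    have h : HasDerivAt (fun u : ℝ => -u ^ 2 / 2) (-u) u := by
      simpa using (((hasDerivAt_pow 2 u).neg).div_const 2).congr_deriv (by push_cast; ring)
    simpa [mul_comm] using h.exp
  have hp := (PH k).hasDerivAt u
  have h : HasDerivAt (fun u : ℝ => cN k * (Real.exp (-u ^ 2 / 2) * (PH k).eval u))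
      (cN k * Real.exp (-u ^ 2 / 2) * ((PH k).derivative.eval u - u * (PH k).eval u)) u := by
    have h0 := (hE.mul hp).const_mul (cN k)
    exact h0.congr_deriv (by ring)
  have h2 : (fun u => cN k * (Real.exp (-u ^ 2 / 2) * (PH k).eval u)) = osc k := by
    funext v; rw [osc_eq]
  rw [h2] at h
  refine h.congr_deriv ?_
  have hsucc : (PH (k+1)).eval u = 2 * u * (PH k).eval u - (PH k).derivative.eval u := by
    simp [show PH (k+1) = C 2 * X * PH k - derivative (PH k) from rfl]
  cases k with
  | zero =>
    have hk : Real.sqrt 2 * cN 1 = cN 0 := by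
      have := cN_key 0; norm_num at this; exact this
    simp only [osc_eq]
    norm_num
    rw [show PH 1 = C 2 * X * PH 0 - derivative (PH 0) from rfl]
    simp [PH]
    linear_combination (-(Real.exp (-u^2/2) * u)) * hk
  | succ m =>
    have hk1 : Real.sqrt (2 * ((m:ℝ) + 1)) * cN (m + 1) = cN m := by
      have := cN_key m; push_cast at this ⊢; exact this
    have hk2 : Real.sqrt (2 * ((m:ℝ) + 1 + 1)) * cN (m + 1 + 1) = cN (m + 1) := by
      exact_mod_cast cN_key (m + 1)
    have hsq : Real.sqrt (2 * ((m:ℝ) + 1)) * Real.sqrt (2 * ((m:ℝ) + 1)) = 2 * ((m:ℝ) + 1) := by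
      apply Real.mul_self_sqrt; positivity
    have hs : (PH (m+1+1)).eval u = 2 * u * (PH (m+1)).eval u - (2 * ((m:ℝ)+1)) * (PH m).eval u := by
      rw [hsucc, PH_derivative (m+1), Nat.add_sub_cancel]; push_cast; simp
    simp only [osc_eq, Nat.add_sub_cancel]
    rw [PH_derivative (m + 1), Nat.add_sub_cancel, hs]
    simp only [eval_mul, eval_C]
    push_cast
    linear_combination (Real.exp (-u^2/2) * (PH m).eval u * Real.sqrt (2*((m:ℝ)+1)) / 2) * hk1
      + (Real.exp (-u^2/2) * (u * (PH (m+1)).eval u - ((m:ℝ)+1) * (PH m).eval u)) * hk2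
      + (-(Real.exp (-u^2/2) * (PH m).eval u * cN (m+1) / 2)) * hsq

lemma tendsto_gauss_mul_eval (p : Polynomial ℝ) :
    Tendsto (fun u : ℝ => Real.exp (-u ^ 2 / 2) * p.eval u) atTop (𝓝 0) := by
  induction p using Polynomial.induction_on' with
  | add p q hp hq =>
    have := hp.add hq
    simpa [mul_add] using this
  | monomial n a =>
    have h0 := tendsto_pow_mul_exp_neg_atTop_nhds_zero n
    have h1 : Tendsto (fun u : ℝ => u ^ n * Real.exp (-u ^ 2 / 2)) atTop (𝓝 0) := by
      apply squeeze_zero_norm' _ h0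
      filter_upwards [eventually_ge_atTop (2 : ℝ)] with u hu
      have hu0 : (0:ℝ) ≤ u := by linarith
      rw [Real.norm_eq_abs, abs_mul, abs_pow, abs_of_nonneg hu0, abs_of_nonneg (Real.exp_pos _).le]
      gcongr
      nlinarith
    have := h1.const_mul a
    simp only [mul_zero] at this
    refine this.congr' ?_
    filter_upwards with u
    simp [Polynomial.eval_monomial]
    ring

lemma osc_tendsto (k : ℕ) : Tendsto (osc k) atTop (𝓝 0) := by
  have h := (tendsto_gauss_mul_eval (PH k)).const_mul (cN k)
  simp only [mul_zero] at h
  refine h.congr ?_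
  intro u; rw [osc_eq]

lemma osc_shift_tendsto (k : ℕ) (x : ℝ) : Tendsto (fun z => osc k (x + z)) atTop (𝓝 0) :=
  (osc_tendsto k).comp (tendsto_atTop_add_const_left atTop x tendsto_id)

lemma int1 (p : Polynomial ℝ) : Integrable fun z : ℝ => p.eval z * Real.exp (-z ^ 2) := by
  induction p using Polynomial.induction_on' with
  | add p q hp hq =>
    simpa [add_mul] using hp.fun_add hq
  | monomial n a =>
    have h := integrable_rpow_mul_exp_neg_mul_sq (b := 1) one_pos (s := (n:ℝ)) (by have := Nat.cast_nonneg (α := ℝ) n; linarith)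
    simp only [Real.rpow_natCast, neg_mul, one_mul] at h
    have := h.const_mul a
    refine this.congr ?_
    filter_upwards with z
    simp [Polynomial.eval_monomial]
    ring

lemma int2 (p : Polynomial ℝ) (s : ℝ) :
    Integrable fun z : ℝ => p.eval z * Real.exp (-(z + s) ^ 2) := by
  have h := (int1 (p.comp (Polynomial.X - Polynomial.C s))).comp_add_right s
  refine h.congr ?_
  filter_upwards with z
  simp [Polynomial.eval_comp]

/-- Integral representation of the GUE kernel:
`Σ_{k<N} φ_k(x)φ_k(y) = (√(2N)/2) ∫₀^∞ [φ_N(x+z)φ_{N-1}(y+z) + φ_{N-1}(x+z)φ_N(y+z)] dz`. -/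
theorem gue_kernel_integral_representation (N : ℕ) (hN : 1 ≤ N) (x y : ℝ) :
    IntegrableOn
      (fun z => osc N (x + z) * osc (N - 1) (y + z) + osc (N - 1) (x + z) * osc N (y + z))
      (Set.Ioi (0 : ℝ)) ∧
    ∑ k ∈ Finset.range N, osc k x * osc k y =
      Real.sqrt (2 * N) / 2 *
        ∫ z in Set.Ioi (0 : ℝ),
          (osc N (x + z) * osc (N - 1) (y + z) + osc (N - 1) (x + z) * osc N (y + z)) := by
  set c : ℝ := Real.sqrt (2 * N) / 2 with hc
  set g : ℝ → ℝ := fun z =>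
    osc N (x + z) * osc (N - 1) (y + z) + osc (N - 1) (x + z) * osc N (y + z) with hg
  have hexp : ∀ z : ℝ, Real.exp (-(x + z) ^ 2 / 2) * Real.exp (-(y + z) ^ 2 / 2)
      = Real.exp (-(z + (x + y) / 2) ^ 2) * Real.exp (-(x ^ 2 + y ^ 2) / 2 + (x + y) ^ 2 / 4) := by
    intro z; rw [← Real.exp_add, ← Real.exp_add]; congr 1; ring
  have hgint : Integrable g := by
    have h := ((int2 (Polynomial.C (cN N * cN (N - 1)) *
        ((PH N).comp (Polynomial.C x + Polynomial.X) *
            (PH (N - 1)).comp (Polynomial.C y + Polynomial.X)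
          + (PH (N - 1)).comp (Polynomial.C x + Polynomial.X) *
            (PH N).comp (Polynomial.C y + Polynomial.X)))
        ((x + y) / 2)).mul_const (Real.exp (-(x ^ 2 + y ^ 2) / 2 + (x + y) ^ 2 / 4)))
    refine h.congr ?_
    filter_upwards with z
    rw [mul_assoc, ← hexp z]
    simp only [hg, osc_eq, Polynomial.eval_mul, Polynomial.eval_add, Polynomial.eval_C,
      Polynomial.eval_comp, Polynomial.eval_X]
    ring
  have hIntOn : IntegrableOn g (Set.Ioi (0 : ℝ)) := hgint.integrableOn
  refine ⟨hIntOn, ?_⟩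
  -- the derivative of the kernel sum
  have hF : ∀ z : ℝ, HasDerivAt (fun z => ∑ k ∈ Finset.range N, osc k (x + z) * osc k (y + z))
      (-c * g z) z := by
    intro z
    have hshift : ∀ (w : ℝ) (k : ℕ), HasDerivAt (fun z => osc k (w + z))
        (Real.sqrt (2 * k) / 2 * osc (k - 1) (w + z)
          - Real.sqrt (2 * (k + 1)) / 2 * osc (k + 1) (w + z)) z := by
      intro w k
      have := (osc_hasDerivAt k (w + z)).comp z ((hasDerivAt_id z).const_add w)
      simpa [Function.comp_def] using this
    have hterm : ∀ k ∈ Finset.range N, HasDerivAt (fun z => osc k (x + z) * osc k (y + z))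
        ((Real.sqrt (2 * k) / 2 * osc (k - 1) (x + z)
            - Real.sqrt (2 * (k + 1)) / 2 * osc (k + 1) (x + z)) * osc k (y + z)
          + osc k (x + z) * (Real.sqrt (2 * k) / 2 * osc (k - 1) (y + z)
            - Real.sqrt (2 * (k + 1)) / 2 * osc (k + 1) (y + z))) z :=
      fun k _ => (hshift x k).mul (hshift y k)
    have hsum := HasDerivAt.fun_sum hterm
    refine hsum.congr_deriv ?_
    set f : ℕ → ℝ := fun k => Real.sqrt (2 * k) / 2 *
      (osc (k - 1) (x + z) * osc k (y + z) + osc k (x + z) * osc (k - 1) (y + z)) with hf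
    have hterm_eq : ∀ k : ℕ,
        (Real.sqrt (2 * k) / 2 * osc (k - 1) (x + z)
            - Real.sqrt (2 * (k + 1)) / 2 * osc (k + 1) (x + z)) * osc k (y + z)
          + osc k (x + z) * (Real.sqrt (2 * k) / 2 * osc (k - 1) (y + z)
            - Real.sqrt (2 * (k + 1)) / 2 * osc (k + 1) (y + z)) = f k - f (k + 1) := by
      intro k
      simp only [hf, Nat.add_sub_cancel]
      push_cast
      ring
    calc ∑ k ∈ Finset.range N,
          ((Real.sqrt (2 * k) / 2 * osc (k - 1) (x + z)
            - Real.sqrt (2 * (k + 1)) / 2 * osc (k + 1) (x + z)) * osc k (y + z)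
          + osc k (x + z) * (Real.sqrt (2 * k) / 2 * osc (k - 1) (y + z)
            - Real.sqrt (2 * (k + 1)) / 2 * osc (k + 1) (y + z)))
        = ∑ k ∈ Finset.range N, (f k - f (k + 1)) := by
          exact Finset.sum_congr rfl fun k _ => hterm_eq k
      _ = f 0 - f N := Finset.sum_range_sub' f N
      _ = -c * g z := by
          have h0 : f 0 = 0 := by simp [hf]
          rw [h0, hf, hg, hc]
          ring
  have htendF : Tendsto (fun z => ∑ k ∈ Finset.range N, osc k (x + z) * osc k (y + z))
      atTop (𝓝 0) := by
    have := tendsto_finset_sum (Finset.range N)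
      (fun k (_ : k ∈ Finset.range N) => (osc_shift_tendsto k x).mul (osc_shift_tendsto k y))
    simpa using this
  have key := integral_Ioi_of_hasDerivAt_of_tendsto' (fun z _ => hF z)
    (hIntOn.const_mul (-c)) htendF
  rw [MeasureTheory.integral_const_mul] at key
  simp only [add_zero, zero_sub] at key
  linarith [key]
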